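/- Let n ≥ 2, let x_1 ≤ ⋯ ≤ x_n be real numbers with Σ_{i=1}^{n} x_i = 0, and set σ_μ² := (1/n) Σ_{i=1}^{n} x_i². Let z_1 ≤ ⋯ ≤ z_{n−1} be real numbers with Φ(z_i) = i/n for i = 1, …, n−1, and set l := Σ_{i=1}^{n−1} (x_{i+1} − x_i) φ(z_i). Denote by W(σ) := ∫_{−∞}^{z_1} (x_1 − σ z)² φ(z) dz + Σ_{i=2}^{n−1} ∫_{z_{i−1}}^{z_i} (x_i − σ z)² φ(z) dz + ∫_{z_{n−1}}^{∞} (x_n − σ z)² φ(z) dz the squared quadratic transport cost from the empirical distribution to the centered Gaussian of standard deviation σ. Then the infimum of W(σ) over σ ∈ [0, ∞) equals σ_μ² − l², and it is attained at σ = l. -/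

import Mathlib

open MeasureTheory

/-- The standard normal density `φ(z) = (2π)^{-1/2} exp(-z²/2)`. -/
noncomputable def stdGaussianPDF (z : ℝ) : ℝ :=
  (Real.sqrt (2 * Real.pi))⁻¹ * Real.exp (-z ^ 2 / 2)

/-- The standard normal cumulative distribution function `Φ(t) = ∫_{-∞}^t φ(z) dz`. -/
noncomputable def stdGaussianCDF (t : ℝ) : ℝ :=
  ∫ z in Set.Iic t, stdGaussianPDF z

namespace StdGaussAux

open Real Set Filter Topology

lemma phi_eq (t : ℝ) :
    stdGaussianPDF t = (Real.sqrt (2 * Real.pi))⁻¹ * Real.exp (-(2⁻¹ : ℝ) * t ^ 2) := by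
  unfold stdGaussianPDF; ring_nf

lemma phi_nonneg (t : ℝ) : 0 ≤ stdGaussianPDF t :=
  mul_nonneg (inv_nonneg.2 (Real.sqrt_nonneg _)) (Real.exp_nonneg _)

lemma continuous_phi : Continuous stdGaussianPDF := by
  unfold stdGaussianPDF
  fun_prop

lemma integrable_phi : Integrable stdGaussianPDF := by
  have h : stdGaussianPDF
      = fun t => (Real.sqrt (2 * Real.pi))⁻¹ * Real.exp (-(2⁻¹ : ℝ) * t ^ 2) :=
    funext phi_eq
  rw [h]
  exact (integrable_exp_neg_mul_sq (by norm_num : (0:ℝ) < 2⁻¹)).const_mul _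

lemma integrable_t_phi : Integrable (fun t : ℝ => t * stdGaussianPDF t) := by
  have h : (fun t : ℝ => t * stdGaussianPDF t)
      = fun t => (Real.sqrt (2 * Real.pi))⁻¹ * (t * Real.exp (-(2⁻¹ : ℝ) * t ^ 2)) := by
    funext t; rw [phi_eq]; ring
  rw [h]
  exact (integrable_mul_exp_neg_mul_sq (by norm_num : (0:ℝ) < 2⁻¹)).const_mul _

lemma integrable_sq_phi : Integrable (fun t : ℝ => t ^ 2 * stdGaussianPDF t) := by
  have h0 := integrable_rpow_mul_exp_neg_mul_sq (by norm_num : (0:ℝ) < 2⁻¹)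
    (by norm_num : (-1:ℝ) < 2)
  have h : (fun t : ℝ => t ^ 2 * stdGaussianPDF t)
      = fun t => (Real.sqrt (2 * Real.pi))⁻¹ * (t ^ ((2:ℕ):ℝ) * Real.exp (-(2⁻¹ : ℝ) * t ^ 2)) := by
    funext t; rw [phi_eq, Real.rpow_natCast]; ring
  rw [h]
  exact (by exact_mod_cast h0 : Integrable fun t : ℝ =>
    t ^ ((2:ℕ):ℝ) * Real.exp (-(2⁻¹:ℝ) * t ^ 2)).const_mul _

lemma integrable_quad (c σ : ℝ) : Integrable (fun t : ℝ => (c - σ * t) ^ 2 * stdGaussianPDF t) := by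
  have h : (fun t : ℝ => (c - σ * t) ^ 2 * stdGaussianPDF t)
      = fun t => c ^ 2 * stdGaussianPDF t + (-(2 * c * σ)) * (t * stdGaussianPDF t)
          + σ ^ 2 * (t ^ 2 * stdGaussianPDF t) := by
    funext t; ring
  rw [h]
  exact ((integrable_phi.const_mul _).add (integrable_t_phi.const_mul _)).add
    (integrable_sq_phi.const_mul _)

lemma tendsto_phi_cocompact : Tendsto stdGaussianPDF (cocompact ℝ) (𝓝 0) := by
  have h := tendsto_rpow_abs_mul_exp_neg_mul_sq_cocompact (by norm_num : (0:ℝ) < 2⁻¹) 0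
  simp only [Real.rpow_zero, one_mul] at h
  have h2 := h.const_mul ((Real.sqrt (2 * Real.pi))⁻¹)
  rw [mul_zero] at h2
  exact h2.congr fun t => (phi_eq t).symm

lemma tendsto_tphi_cocompact : Tendsto (fun t : ℝ => t * stdGaussianPDF t) (cocompact ℝ) (𝓝 0) := by
  rw [tendsto_zero_iff_abs_tendsto_zero]
  have h := tendsto_rpow_abs_mul_exp_neg_mul_sq_cocompact (by norm_num : (0:ℝ) < 2⁻¹) 1
  simp only [Real.rpow_one] at h
  have h2 := h.const_mul ((Real.sqrt (2 * Real.pi))⁻¹)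
  rw [mul_zero] at h2
  refine h2.congr fun t => ?_
  simp only [Function.comp_apply]
  rw [abs_mul, abs_of_nonneg (phi_nonneg t), phi_eq]
  ring

lemma tendsto_phi_atBot : Tendsto stdGaussianPDF atBot (𝓝 0) :=
  tendsto_phi_cocompact.mono_left (by rw [cocompact_eq_atBot_atTop]; exact le_sup_left)

lemma tendsto_phi_atTop : Tendsto stdGaussianPDF atTop (𝓝 0) :=
  tendsto_phi_cocompact.mono_left (by rw [cocompact_eq_atBot_atTop]; exact le_sup_right)

lemma tendsto_tphi_atBot : Tendsto (fun t : ℝ => t * stdGaussianPDF t) atBot (𝓝 0) :=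
  tendsto_tphi_cocompact.mono_left (by rw [cocompact_eq_atBot_atTop]; exact le_sup_left)

lemma tendsto_tphi_atTop : Tendsto (fun t : ℝ => t * stdGaussianPDF t) atTop (𝓝 0) :=
  tendsto_tphi_cocompact.mono_left (by rw [cocompact_eq_atBot_atTop]; exact le_sup_right)

lemma hasDerivAt_phi (t : ℝ) : HasDerivAt stdGaussianPDF (-t * stdGaussianPDF t) t := by
  have h1 : HasDerivAt (fun s : ℝ => -s ^ 2 / 2) (-t) t := by
    have := ((hasDerivAt_pow 2 t).neg).div_const 2
    refine HasDerivAt.congr_deriv this ?_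
    norm_num
    ring
  have h2 := (h1.exp).const_mul ((Real.sqrt (2 * Real.pi))⁻¹)
  have heq : -t * stdGaussianPDF t
      = (Real.sqrt (2 * Real.pi))⁻¹ * (Real.exp (-t ^ 2 / 2) * -t) := by
    unfold stdGaussianPDF; ring
  rw [heq]
  exact h2

lemma hasDerivAt_neg_phi (t : ℝ) :
    HasDerivAt (fun s : ℝ => -stdGaussianPDF s) (t * stdGaussianPDF t) t := by
  exact (hasDerivAt_phi t).neg.congr_deriv (by ring)

lemma hasDerivAt_neg_id_phi (t : ℝ) :
    HasDerivAt (fun s : ℝ => -(s * stdGaussianPDF s)) ((t ^ 2 - 1) * stdGaussianPDF t) t := by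
  have h := ((hasDerivAt_id t).mul (hasDerivAt_phi t)).neg
  simp only [id_eq] at h
  refine h.congr_deriv ?_
  ring

lemma integral_Iic_phi (a : ℝ) : ∫ t in Iic a, stdGaussianPDF t = stdGaussianCDF a := rfl

lemma integral_phi_total : ∫ t : ℝ, stdGaussianPDF t = 1 := by
  have h : stdGaussianPDF
      = fun t => (Real.sqrt (2 * Real.pi))⁻¹ * Real.exp (-(2⁻¹ : ℝ) * t ^ 2) :=
    funext phi_eq
  rw [h, integral_const_mul _ _, integral_gaussian, show Real.pi / 2⁻¹ = 2 * Real.pi by ring]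
  exact inv_mul_cancel₀ (Real.sqrt_ne_zero'.mpr (by positivity))

lemma integral_Iic_tphi (a : ℝ) :
    ∫ t in Iic a, t * stdGaussianPDF t = -stdGaussianPDF a := by
  have h := integral_Iic_of_hasDerivAt_of_tendsto (a := a) (m := 0)
    (continuous_phi.neg.continuousWithinAt)
    (fun s _ => hasDerivAt_neg_phi s) integrable_t_phi.integrableOn
    (by rw [← neg_zero]; exact tendsto_phi_atBot.neg)
  simpa using h

lemma integrable_sqm1_phi : Integrable (fun t : ℝ => (t ^ 2 - 1) * stdGaussianPDF t) := by
  have h : (fun t : ℝ => (t ^ 2 - 1) * stdGaussianPDF t)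
      = fun t => t ^ 2 * stdGaussianPDF t - stdGaussianPDF t := by funext t; ring
  rw [h]; exact integrable_sq_phi.sub integrable_phi

lemma integral_Iic_sqm1phi (a : ℝ) :
    ∫ t in Iic a, (t ^ 2 - 1) * stdGaussianPDF t = -(a * stdGaussianPDF a) := by
  have h := integral_Iic_of_hasDerivAt_of_tendsto (a := a) (m := 0)
    ((continuous_id.mul continuous_phi).neg.continuousWithinAt)
    (fun s _ => hasDerivAt_neg_id_phi s) integrable_sqm1_phi.integrableOn
    (by rw [← neg_zero]; exact tendsto_tphi_atBot.neg)
  simpa using h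

lemma integral_Iic_sqphi (a : ℝ) :
    ∫ t in Iic a, t ^ 2 * stdGaussianPDF t
      = stdGaussianCDF a - a * stdGaussianPDF a := by
  have h : (fun t : ℝ => t ^ 2 * stdGaussianPDF t)
      = fun t => (t ^ 2 - 1) * stdGaussianPDF t + stdGaussianPDF t := by funext t; ring
  rw [h, integral_add integrable_sqm1_phi.integrableOn integrable_phi.integrableOn,
    integral_Iic_sqm1phi, integral_Iic_phi]
  ring

lemma integral_Ici_phi (a : ℝ) :
    ∫ t in Ici a, stdGaussianPDF t = 1 - stdGaussianCDF a := by
  have h := intervalIntegral.integral_Iic_add_Ioi (b := a) integrable_phi.integrableOn integrable_phi.integrableOn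
  rw [integral_phi_total, integral_Iic_phi] at h
  rw [integral_Ici_eq_integral_Ioi]
  linarith

lemma integral_Ici_tphi (a : ℝ) :
    ∫ t in Ici a, t * stdGaussianPDF t = stdGaussianPDF a := by
  rw [integral_Ici_eq_integral_Ioi]
  have h := integral_Ioi_of_hasDerivAt_of_tendsto (a := a) (m := 0)
    (continuous_phi.neg.continuousWithinAt)
    (fun s _ => hasDerivAt_neg_phi s) integrable_t_phi.integrableOn
    (by rw [← neg_zero]; exact tendsto_phi_atTop.neg)
  simpa using h

lemma integral_Ici_sqphi (a : ℝ) :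
    ∫ t in Ici a, t ^ 2 * stdGaussianPDF t
      = (1 - stdGaussianCDF a) + a * stdGaussianPDF a := by
  have h1 : ∫ t in Ioi a, (t ^ 2 - 1) * stdGaussianPDF t = a * stdGaussianPDF a := by
    have h := integral_Ioi_of_hasDerivAt_of_tendsto (a := a) (m := 0)
      ((continuous_id.mul continuous_phi).neg.continuousWithinAt)
      (fun s _ => hasDerivAt_neg_id_phi s) integrable_sqm1_phi.integrableOn
      (by rw [← neg_zero]; exact tendsto_tphi_atTop.neg)
    simpa using h
  have h : (fun t : ℝ => t ^ 2 * stdGaussianPDF t)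
      = fun t => (t ^ 2 - 1) * stdGaussianPDF t + stdGaussianPDF t := by funext t; ring
  rw [integral_Ici_eq_integral_Ioi, h,
    integral_add integrable_sqm1_phi.integrableOn integrable_phi.integrableOn, h1,
    ← integral_Ici_eq_integral_Ioi, integral_Ici_phi]
  ring

lemma quad_Iic (c σ a : ℝ) :
    ∫ t in Iic a, (c - σ * t) ^ 2 * stdGaussianPDF t
      = c ^ 2 * stdGaussianCDF a + 2 * σ * c * stdGaussianPDF a
        + σ ^ 2 * (stdGaussianCDF a - a * stdGaussianPDF a) := by
  have h : (fun t : ℝ => (c - σ * t) ^ 2 * stdGaussianPDF t)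
      = fun t => (c ^ 2 * stdGaussianPDF t + (-(2 * c * σ)) * (t * stdGaussianPDF t))
          + σ ^ 2 * (t ^ 2 * stdGaussianPDF t) := by
    funext t; ring
  have A : IntegrableOn (fun t : ℝ => c ^ 2 * stdGaussianPDF t) (Iic a) :=
    (integrable_phi.const_mul _).integrableOn
  have B : IntegrableOn (fun t : ℝ => (-(2 * c * σ)) * (t * stdGaussianPDF t)) (Iic a) :=
    (integrable_t_phi.const_mul _).integrableOn
  have C : IntegrableOn (fun t : ℝ => σ ^ 2 * (t ^ 2 * stdGaussianPDF t)) (Iic a) :=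
    (integrable_sq_phi.const_mul _).integrableOn
  have AB : IntegrableOn (fun t : ℝ => c ^ 2 * stdGaussianPDF t
      + (-(2 * c * σ)) * (t * stdGaussianPDF t)) (Iic a) := A.add B
  rw [h, integral_add AB C, integral_add A B,
    integral_const_mul _ _, integral_const_mul _ _, integral_const_mul _ _,
    integral_Iic_phi, integral_Iic_tphi, integral_Iic_sqphi]
  ring

lemma quad_Ici (c σ a : ℝ) :
    ∫ t in Ici a, (c - σ * t) ^ 2 * stdGaussianPDF t
      = c ^ 2 * (1 - stdGaussianCDF a) - 2 * σ * c * stdGaussianPDF a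
        + σ ^ 2 * ((1 - stdGaussianCDF a) + a * stdGaussianPDF a) := by
  have h : (fun t : ℝ => (c - σ * t) ^ 2 * stdGaussianPDF t)
      = fun t => (c ^ 2 * stdGaussianPDF t + (-(2 * c * σ)) * (t * stdGaussianPDF t))
          + σ ^ 2 * (t ^ 2 * stdGaussianPDF t) := by
    funext t; ring
  have A : IntegrableOn (fun t : ℝ => c ^ 2 * stdGaussianPDF t) (Ici a) :=
    (integrable_phi.const_mul _).integrableOn
  have B : IntegrableOn (fun t : ℝ => (-(2 * c * σ)) * (t * stdGaussianPDF t)) (Ici a) :=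
    (integrable_t_phi.const_mul _).integrableOn
  have C : IntegrableOn (fun t : ℝ => σ ^ 2 * (t ^ 2 * stdGaussianPDF t)) (Ici a) :=
    (integrable_sq_phi.const_mul _).integrableOn
  have AB : IntegrableOn (fun t : ℝ => c ^ 2 * stdGaussianPDF t
      + (-(2 * c * σ)) * (t * stdGaussianPDF t)) (Ici a) := A.add B
  rw [h, integral_add AB C, integral_add A B,
    integral_const_mul _ _, integral_const_mul _ _, integral_const_mul _ _,
    integral_Ici_phi, integral_Ici_tphi, integral_Ici_sqphi]
  ring

lemma quad_interval (c σ a b : ℝ) :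
    ∫ t in a..b, (c - σ * t) ^ 2 * stdGaussianPDF t
      = c ^ 2 * (stdGaussianCDF b - stdGaussianCDF a)
        - 2 * σ * c * (stdGaussianPDF a - stdGaussianPDF b)
        + σ ^ 2 * ((stdGaussianCDF b - stdGaussianCDF a)
            - (b * stdGaussianPDF b - a * stdGaussianPDF a)) := by
  rw [← intervalIntegral.integral_Iic_sub_Iic ((integrable_quad c σ).integrableOn)
      ((integrable_quad c σ).integrableOn), quad_Iic, quad_Iic]
  ring

lemma sum_telescope_Icc (u : ℕ → ℝ) (m : ℕ) (hm : 1 ≤ m) :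
    ∑ i ∈ Finset.Icc 2 m, (u (i - 1) - u i) = u 1 - u m := by
  induction m with
  | zero => omega
  | succ k ih =>
    rcases Nat.lt_or_ge k 1 with hk | hk
    · obtain rfl : k = 0 := by omega
      simp
    · rw [← Finset.insert_Icc_right_eq_Icc_add_one (by omega : 2 ≤ k + 1),
        Finset.sum_insert (by simp only [Finset.mem_Icc]; omega), ih hk]
      simp only [Nat.add_sub_cancel]
      ring

end StdGaussAux
/-- With the setup of the one-dimensional closed form, the squared
transport cost `W(σ)` to the centered Gaussian of standard deviation `σ` attains its
infimum over `σ ∈ [0, ∞)` exactly at `σ = l`, with minimal value `σ_μ² - l²`. -/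
theorem min_squared_transport_cost_to_gaussian_ray
    (n : ℕ) (hn : 2 ≤ n) (x : ℕ → ℝ)
    (hxmono : ∀ i, 1 ≤ i → i < n → x i ≤ x (i + 1))
    (hxsum : ∑ i ∈ Finset.Icc 1 n, x i = 0)
    (σμsq : ℝ) (hσμsq : σμsq = (1 / (n : ℝ)) * ∑ i ∈ Finset.Icc 1 n, (x i) ^ 2)
    (z : ℕ → ℝ)
    (hzmono : ∀ i, 1 ≤ i → i + 1 ≤ n - 1 → z i ≤ z (i + 1))
    (hz : ∀ i, 1 ≤ i → i ≤ n - 1 → stdGaussianCDF (z i) = (i : ℝ) / n)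
    (l : ℝ) (hl : l = ∑ i ∈ Finset.Icc 1 (n - 1), (x (i + 1) - x i) * stdGaussianPDF (z i))
    (W : ℝ → ℝ)
    (hW : ∀ σ : ℝ, W σ =
      (∫ t in Set.Iic (z 1), (x 1 - σ * t) ^ 2 * stdGaussianPDF t)
        + (∑ i ∈ Finset.Icc 2 (n - 1),
            ∫ t in (z (i - 1))..(z i), (x i - σ * t) ^ 2 * stdGaussianPDF t)
        + (∫ t in Set.Ici (z (n - 1)), (x n - σ * t) ^ 2 * stdGaussianPDF t)) :
    IsLeast (W '' Set.Ici (0 : ℝ)) (σμsq - l ^ 2)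
      ∧ l ∈ Set.Ici (0 : ℝ) ∧ W l = σμsq - l ^ 2 := by
  have hn0 : (n : ℝ) ≠ 0 := Nat.cast_ne_zero.mpr (by omega)
  set m := n - 1 with hm_def
  have hm1 : 1 ≤ m := by omega
  have hmn : m + 1 = n := by omega
  have hΦ1 : stdGaussianCDF (z 1) = 1 / (n : ℝ) := by
    have h := hz 1 le_rfl hm1; rw [h]; norm_num
  have hΦm : stdGaussianCDF (z m) = (m : ℝ) / n := hz m hm1 le_rfl
  have hcastm : ((m : ℕ) : ℝ) = (n : ℝ) - 1 := by
    rw [hm_def, Nat.cast_sub (by omega : 1 ≤ n)]; norm_num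
  have hsq : ∑ i ∈ Finset.Icc 1 n, x i ^ 2
      = x 1 ^ 2 + (∑ i ∈ Finset.Icc 2 m, x i ^ 2) + x n ^ 2 := by
    rw [← hmn, ← Finset.insert_Icc_add_one_left_eq_Icc (by omega : 1 ≤ m + 1),
      Finset.sum_insert (by simp only [Finset.mem_Icc]; omega),
      ← Finset.insert_Icc_right_eq_Icc_add_one (by omega : 1 + 1 ≤ m + 1),
      Finset.sum_insert (by simp only [Finset.mem_Icc]; omega)]
    ring
  have hpeel2 : ∑ i ∈ Finset.Icc 2 m, (x (i + 1) - x i) * stdGaussianPDF (z i)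
      = l - (x (1 + 1) - x 1) * stdGaussianPDF (z 1) := by
    rw [hl, ← Finset.insert_Icc_add_one_left_eq_Icc hm1,
      Finset.sum_insert (by simp only [Finset.mem_Icc]; omega)]
    ring
  have htel1 := StdGaussAux.sum_telescope_Icc (fun j => x (j + 1) * stdGaussianPDF (z j)) m hm1
  have htel2 := StdGaussAux.sum_telescope_Icc (fun j => z j * stdGaussianPDF (z j)) m hm1
  have key : ∀ σ : ℝ, W σ = σμsq - 2 * l * σ + σ ^ 2 := by
    intro σ
    have hmid : ∀ i ∈ Finset.Icc 2 m,
        (∫ t in (z (i - 1))..(z i), (x i - σ * t) ^ 2 * stdGaussianPDF t)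
        = x i ^ 2 * (1 / (n : ℝ))
          + σ * ((-2) * ((x (i - 1 + 1) * stdGaussianPDF (z (i - 1))
                - x (i + 1) * stdGaussianPDF (z i))
              + (x (i + 1) - x i) * stdGaussianPDF (z i)))
          + σ ^ 2 * (1 / (n : ℝ)
              + (z (i - 1) * stdGaussianPDF (z (i - 1)) - z i * stdGaussianPDF (z i))) := by
      intro i hi
      simp only [Finset.mem_Icc] at hi
      have hΦi : stdGaussianCDF (z i) = (i : ℝ) / n := hz i (by omega) hi.2
      have hΦi1 : stdGaussianCDF (z (i - 1)) = ((i : ℝ) - 1) / n := by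
        rw [hz (i - 1) (by omega) (by omega), Nat.cast_sub (by omega : 1 ≤ i)]
        norm_num
      rw [StdGaussAux.quad_interval, hΦi, hΦi1, show i - 1 + 1 = i from by omega]
      ring
    rw [hW σ, Finset.sum_congr rfl hmid, StdGaussAux.quad_Iic, StdGaussAux.quad_Ici, hΦ1, hΦm,
      Finset.sum_add_distrib, Finset.sum_add_distrib, ← Finset.mul_sum, ← Finset.mul_sum,
      ← Finset.mul_sum, Finset.sum_add_distrib, htel1, hpeel2,
      Finset.sum_add_distrib, Finset.sum_const, htel2, nsmul_eq_mul, Nat.card_Icc]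
    rw [← Finset.sum_mul, show m + 1 = n from hmn, hσμsq, hsq]
    rw [Nat.cast_sub (by omega : 2 ≤ n)]
    push_cast
    rw [hcastm]
    field_simp
    ring
  have hl0 : (0 : ℝ) ≤ l := by
    rw [hl]
    apply Finset.sum_nonneg
    intro i hi
    simp only [Finset.mem_Icc] at hi
    exact mul_nonneg (sub_nonneg.2 (hxmono i hi.1 (by omega))) (StdGaussAux.phi_nonneg _)
  refine ⟨⟨⟨l, hl0, by rw [key l]; ring⟩, ?_⟩, hl0, by rw [key l]; ring⟩
  rintro y ⟨σ, hσ, rfl⟩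
  rw [key σ]
  nlinarith [sq_nonneg (σ - l)]
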